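/- Let m ≥ 3, n ≥ 2 and k ≥ 0, and write λ = 2k+1. Let N(m,r) denote the number of proper colorings of the signed book graph B^{uv}(m,r) with color set {−k,…,−1,0,1,…,k}. Then N(m,n) = (λ−1)·γ_{m−1}(λ)·N(m,n−1) + (−1)^m·(λ−1)^2·γ_m(λ)^{n−1}. -/

import Mathlib

/-- Vertices of the book graph `B(m,n)`: `Sum.inl false` is `u`, `Sum.inl true` is `v`,
and `Sum.inr (i, j)` is the vertex `u_{j+1}^{i+1}`. -/
abbrev BookVertex (m n : ℕ) := Bool ⊕ (Fin n × Fin (m - 2))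

/-- Adjacency relation of the book graph `B(m,n)`. -/
def bookAdj (m n : ℕ) : BookVertex m n → BookVertex m n → Prop
  | Sum.inl a, Sum.inl b => a ≠ b
  | Sum.inl false, Sum.inr (_, j) => j.val = 0
  | Sum.inl true, Sum.inr (_, j) => j.val = m - 3
  | Sum.inr (_, j), Sum.inl false => j.val = 0
  | Sum.inr (_, j), Sum.inl true => j.val = m - 3
  | Sum.inr (i, j), Sum.inr (i', j') => i = i' ∧ (j.val + 1 = j'.val ∨ j'.val + 1 = j.val)

/-- The signature `σ_l` of `B(m,n)`: exactly the edges `u u_1^1, …, u u_1^l` are negative. -/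
def sigmaL (m n l : ℕ) : BookVertex m n → BookVertex m n → ℤ
  | Sum.inl false, Sum.inr (i, j) => if j.val = 0 ∧ i.val < l then -1 else 1
  | Sum.inr (i, j), Sum.inl false => if j.val = 0 ∧ i.val < l then -1 else 1
  | _, _ => 1

/-- The signature of `B^{uv}(m,n)`: exactly the edge `uv` is negative. -/
def sigmaUV (m n : ℕ) : BookVertex m n → BookVertex m n → ℤ
  | Sum.inl _, Sum.inl _ => -1
  | _, _ => 1

/-- `γ_m(x) = ∑_{i=0}^{m-2} (-1)^i (x-1)^{m-2-i}`. -/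
def gammaP (m : ℕ) (x : ℤ) : ℤ := ∑ i ∈ Finset.range (m - 1), (-1) ^ i * (x - 1) ^ (m - 2 - i)

/-- The number of proper colorings of the signed book graph `B^{uv}(m,r)` (only the edge
`uv` negative) with color set `{-k, …, -1, 0, 1, …, k}`. -/
noncomputable def NColUV (m r k : ℕ) : ℕ :=
  Nat.card {c : BookVertex m r → ℤ //
    (∀ x, |c x| ≤ (k : ℤ)) ∧
    ∀ x y, bookAdj m r x y → c x ≠ sigmaUV m r x y * c y}


def pq (k : ℕ) : ℕ → ℤ × ℤ
  | 0 => (0, 1)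
  | (n+1) => ((pq k n).2 + (2*(k:ℤ)-1) * (pq k n).1, 2*(k:ℤ) * (pq k n).1)

lemma gammaP_rec (ℓ : ℕ) (x : ℤ) : gammaP (ℓ+2) x = (x-1) * gammaP (ℓ+1) x + (-1)^ℓ := by
  unfold gammaP
  simp only [Nat.add_sub_cancel, show ℓ+2-1 = ℓ+1 from rfl]
  rw [Finset.sum_range_succ, Finset.mul_sum]
  congr 1
  · apply Finset.sum_congr rfl
    intro i hi
    simp only [Finset.mem_range] at hi
    have h1 : ℓ - i = (ℓ + 1 - 2 - i) + 1 := by omega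
    rw [h1, pow_succ]
    ring
  · rw [Nat.sub_self, pow_zero, mul_one]

lemma pq_eq_gamma (k : ℕ) : ∀ ℓ : ℕ,
    (pq k (ℓ+1)).1 = gammaP (ℓ+2) (2*(k:ℤ)+1) ∧
    (pq k (ℓ+1)).2 = 2*(k:ℤ) * gammaP (ℓ+1) (2*(k:ℤ)+1) := by
  intro ℓ
  induction ℓ with
  | zero =>
    constructor
    · show (pq k 0).2 + (2*(k:ℤ)-1) * (pq k 0).1 = _
      unfold gammaP pq; simp
    · show 2*(k:ℤ) * (pq k 0).1 = _
      unfold gammaP pq; simp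
  | succ ℓ ih =>
    obtain ⟨ih1, ih2⟩ := ih
    constructor
    · show (pq k (ℓ+1)).2 + (2*(k:ℤ)-1) * (pq k (ℓ+1)).1 = _
      rw [ih1, ih2, gammaP_rec (ℓ+1), gammaP_rec ℓ]
      ring_nf
    · show 2*(k:ℤ) * (pq k (ℓ+1)).1 = _
      rw [ih1]

/-- colorings of a path of `t+1` internal vertices, with virtual endpoints colored `a`, `b`. -/
noncomputable def pageFinset (k t : ℕ) (a b : ℤ) : Finset (Fin (t+1) → ℤ) :=
  (Fintype.piFinset fun _ => Finset.Icc (-(k:ℤ)) k).filter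
    (fun f => a ≠ f 0 ∧ f (Fin.last t) ≠ b ∧ ∀ j : Fin t, f j.castSucc ≠ f j.succ)

lemma kpos (k : ℕ) {a b : ℤ} (ha : a ∈ Finset.Icc (-(k:ℤ)) k) (hb : b ∈ Finset.Icc (-(k:ℤ)) k)
    (hab : a ≠ b) : 1 ≤ k := by
  simp only [Finset.mem_Icc] at ha hb; omega

lemma card_T (k : ℕ) : (Finset.Icc (-(k:ℤ)) k).card = 2*k+1 := by
  rw [Int.card_Icc]; omega

lemma pageFinset_zero (k : ℕ) (a b : ℤ) :
    pageFinset k 0 a b = (((Finset.Icc (-(k:ℤ)) k).erase a).erase b).image (fun x _ => x) := by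
  ext f
  simp only [pageFinset, Finset.mem_filter, Fintype.mem_piFinset, Finset.mem_image,
    Finset.mem_erase]
  constructor
  · rintro ⟨h1, h2, h3, -⟩
    refine ⟨f 0, ⟨?_, ?_, h1 0⟩, ?_⟩
    · exact h3
    · exact fun h => h2 h.symm
    · funext j; rw [Fin.fin_one_eq_zero j]
  · rintro ⟨x, ⟨hxb, hxa, hx⟩, rfl⟩
    exact ⟨fun _ => hx, fun h => hxa h.symm, hxb, fun j => j.elim0⟩

lemma pageFinset_succ (k t : ℕ) (a b : ℤ) :
    pageFinset k (t+1) a b =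
      ((Finset.Icc (-(k:ℤ)) k).erase a).biUnion
        (fun c => (pageFinset k t c b).image (Fin.cons c)) := by
  ext f
  simp only [pageFinset, Finset.mem_biUnion, Finset.mem_filter, Fintype.mem_piFinset,
    Finset.mem_image, Finset.mem_erase]
  constructor
  · rintro ⟨h1, h2, h3, h4⟩
    refine ⟨f 0, ⟨fun h => h2 h.symm, h1 0⟩, fun j => f j.succ, ⟨⟨fun j => h1 j.succ, ?_, ?_, ?_⟩, ?_⟩⟩
    · have := h4 0
      simpa using this
    · simpa [Fin.succ_last] using h3
    · intro j
      have := h4 j.succ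
      rwa [← Fin.succ_castSucc] at this
    · exact (Fin.cons_self_tail f)
  · rintro ⟨c, ⟨hca, hc⟩, g, ⟨⟨hg1, hg2, hg3, hg4⟩, rfl⟩⟩
    refine ⟨?_, ?_, ?_, ?_⟩
    · intro j
      refine Fin.cases ?_ ?_ j
      · simpa using hc
      · intro i; simpa using hg1 i
    · simpa using fun h => hca h.symm
    · rw [← Fin.succ_last, Fin.cons_succ]; exact hg3
    · intro j
      refine Fin.cases ?_ ?_ j
      · simpa using hg2
      · intro i
        rw [← Fin.succ_castSucc, Fin.cons_succ, Fin.cons_succ]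
        exact hg4 i
lemma pageFinset_card (k : ℕ) : ∀ (t : ℕ) (a b : ℤ), a ∈ Finset.Icc (-(k:ℤ)) k →
    b ∈ Finset.Icc (-(k:ℤ)) k →
    ((pageFinset k t a b).card : ℤ) = if a = b then (pq k (t+2)).2 else (pq k (t+2)).1 := by
  intro t
  induction t with
  | zero =>
    intro a b ha hb
    rw [pageFinset_zero, Finset.card_image_of_injective _ (fun x y h => congrFun h 0)]
    by_cases hab : a = b
    · subst hab
      rw [Finset.erase_idem, Finset.card_erase_of_mem ha, card_T, if_pos rfl,
        show (pq k 2).2 = 2*(k:ℤ) by simp [pq]]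
      omega
    · have hk := kpos k ha hb hab
      rw [Finset.card_erase_of_mem (Finset.mem_erase.mpr ⟨Ne.symm hab, hb⟩),
        Finset.card_erase_of_mem ha, card_T]
      rw [if_neg hab, show (pq k 2).1 = 2*(k:ℤ)-1 by simp [pq]]
      omega
  | succ t ih =>
    intro a b ha hb
    have hdisj : ∀ c ∈ (Finset.Icc (-(k:ℤ)) k).erase a, ∀ c' ∈ (Finset.Icc (-(k:ℤ)) k).erase a,
        c ≠ c' → Disjoint ((pageFinset k t c b).image (Fin.cons c))
          ((pageFinset k t c' b).image (@Fin.cons (t+1) (fun _ => ℤ) c')) := by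
      intro c _ c' _ hcc'
      rw [Finset.disjoint_left]
      rintro f hf hf'
      simp only [Finset.mem_image] at hf hf'
      obtain ⟨g, -, rfl⟩ := hf
      obtain ⟨g', -, h⟩ := hf'
      have h0 := congrFun h 0
      simp only [Fin.cons_zero] at h0
      exact hcc' h0.symm
    rw [pageFinset_succ, Finset.card_biUnion hdisj]
    push_cast
    have hcongr : ∀ c ∈ (Finset.Icc (-(k:ℤ)) k).erase a,
        (((pageFinset k t c b).image (@Fin.cons (t+1) (fun _ => ℤ) c)).card : ℤ) =
          if c = b then (pq k (t+2)).2 else (pq k (t+2)).1 := by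
      intro c hc
      rw [Finset.card_image_of_injective _ (@Fin.cons_right_injective _ (fun _ => ℤ) c)]
      exact ih c b (Finset.mem_of_mem_erase hc) hb
    rw [Finset.sum_congr rfl hcongr]
    by_cases hab : a = b
    · subst hab
      rw [if_pos rfl]
      have : ∀ c ∈ (Finset.Icc (-(k:ℤ)) k).erase a,
          (if c = a then (pq k (t+2)).2 else (pq k (t+2)).1) = (pq k (t+2)).1 := by
        intro c hc
        rw [if_neg (Finset.mem_erase.mp hc).1]
      rw [Finset.sum_congr rfl this, Finset.sum_const, Finset.card_erase_of_mem ha, card_T]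
      show _ = 2*(k:ℤ) * (pq k (t+2)).1
      rw [nsmul_eq_mul]
      have h2 : ((2*k+1-1 : ℕ) : ℤ) = 2*(k:ℤ) := by omega
      rw [h2]
    · rw [if_neg hab]
      have hk := kpos k ha hb hab
      have hbmem : b ∈ (Finset.Icc (-(k:ℤ)) k).erase a := Finset.mem_erase.mpr ⟨Ne.symm hab, hb⟩
      rw [← Finset.sum_erase_add _ _ hbmem, if_pos rfl]
      have : ∀ c ∈ ((Finset.Icc (-(k:ℤ)) k).erase a).erase b,
          (if c = b then (pq k (t+2)).2 else (pq k (t+2)).1) = (pq k (t+2)).1 := by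
        intro c hc
        rw [if_neg (Finset.mem_erase.mp hc).1]
      rw [Finset.sum_congr rfl this, Finset.sum_const,
        Finset.card_erase_of_mem hbmem, Finset.card_erase_of_mem ha, card_T]
      show _ = (pq k (t+2)).2 + (2*(k:ℤ)-1) * (pq k (t+2)).1
      rw [nsmul_eq_mul]
      have : ((2*k+1-1-1 : ℕ) : ℤ) = 2*(k:ℤ) - 1 := by omega
      rw [this]
      ring
lemma sum_pairs (k r : ℕ) (Q P : ℤ) :
    ∑ p ∈ ((Finset.Icc (-(k:ℤ)) k) ×ˢ (Finset.Icc (-(k:ℤ)) k)).filter (fun p => p.1 ≠ -p.2),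
      (if p.1 = p.2 then Q else P)^r = 2*k*Q^r + (2*(k:ℤ))^2*P^r := by
  rw [Finset.sum_filter, Finset.sum_product]
  have h0T : (0:ℤ) ∈ Finset.Icc (-(k:ℤ)) k := by simp
  have inner : ∀ a ∈ Finset.Icc (-(k:ℤ)) k,
      (∑ b ∈ Finset.Icc (-(k:ℤ)) k,
        if (a, b).1 ≠ -(a, b).2 then (if (a, b).1 = (a, b).2 then Q else P)^r else 0) =
      if a = 0 then 2*k*P^r else Q^r + (2*(k:ℤ)-1)*P^r := by
    intro a ha
    by_cases ha0 : a = 0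
    · subst ha0
      rw [if_pos rfl, ← Finset.sum_erase_add _ _ h0T]
      rw [if_neg (by simp)]
      have hc : ∀ b ∈ (Finset.Icc (-(k:ℤ)) k).erase 0,
          (if ((0:ℤ), b).1 ≠ -((0:ℤ), b).2 then (if ((0:ℤ), b).1 = ((0:ℤ), b).2 then Q else P)^r else 0)
          = P^r := by
        intro b hb
        have hb' := Finset.mem_erase.mp hb
        rw [if_pos (by simp; omega), if_neg (by simp; omega)]
      rw [Finset.sum_congr rfl hc, Finset.sum_const, Finset.card_erase_of_mem h0T, card_T,
        nsmul_eq_mul]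
      have : ((2*k+1-1 : ℕ) : ℤ) = 2*(k:ℤ) := by omega
      rw [this, add_zero]
    · rw [if_neg ha0]
      have hk : 1 ≤ k := by
        simp only [Finset.mem_Icc] at ha; omega
      have hma : -a ∈ Finset.Icc (-(k:ℤ)) k := by
        simp only [Finset.mem_Icc] at ha ⊢; omega
      rw [← Finset.sum_erase_add _ _ hma, if_neg (by simp)]
      have haem : a ∈ (Finset.Icc (-(k:ℤ)) k).erase (-a) := by
        rw [Finset.mem_erase]; exact ⟨by omega, ha⟩
      rw [← Finset.sum_erase_add _ _ haem, if_pos (by simp; omega), if_pos rfl]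
      have hc : ∀ b ∈ ((Finset.Icc (-(k:ℤ)) k).erase (-a)).erase a,
          (if (a, b).1 ≠ -(a, b).2 then (if (a, b).1 = (a, b).2 then Q else P)^r else 0)
          = P^r := by
        intro b hb
        rw [Finset.mem_erase, Finset.mem_erase] at hb
        rw [if_pos (by simp; omega), if_neg (by simp; omega)]
      rw [Finset.sum_congr rfl hc, Finset.sum_const, Finset.card_erase_of_mem haem,
        Finset.card_erase_of_mem hma, card_T, nsmul_eq_mul]
      have : ((2*k+1-1-1 : ℕ) : ℤ) = 2*(k:ℤ)-1 := by omega
      rw [this, add_zero]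
      ring
  rw [Finset.sum_congr rfl inner, ← Finset.sum_erase_add _ _ h0T, if_pos rfl]
  have hc : ∀ a ∈ (Finset.Icc (-(k:ℤ)) k).erase 0,
      (if a = 0 then 2*k*P^r else Q^r + (2*(k:ℤ)-1)*P^r) = Q^r + (2*(k:ℤ)-1)*P^r := by
    intro a haa
    rw [if_neg (Finset.mem_erase.mp haa).1]
  rw [Finset.sum_congr rfl hc, Finset.sum_const, Finset.card_erase_of_mem h0T, card_T,
    nsmul_eq_mul]
  have : ((2*k+1-1 : ℕ) : ℤ) = 2*(k:ℤ) := by omega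
  rw [this]
  ring
open Classical in
noncomputable def bookFinset (m r k : ℕ) : Finset (BookVertex m r → ℤ) :=
  (Fintype.piFinset fun _ => Finset.Icc (-(k:ℤ)) k).filter
    (fun c => ∀ x y, bookAdj m r x y → c x ≠ sigmaUV m r x y * c y)

lemma fiber_card (k m' r : ℕ) (a b : ℤ) (ha : a ∈ Finset.Icc (-(k:ℤ)) k)
    (hb : b ∈ Finset.Icc (-(k:ℤ)) k) (hab : a ≠ -b) :
    ((bookFinset (m'+3) r k).filter
      (fun c => (c (Sum.inl false), c (Sum.inl true)) = (a, b))).card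
    = (pageFinset k m' a b).card ^ r := by
  classical
  have key : (bookFinset (m'+3) r k).filter
      (fun c => (c (Sum.inl false), c (Sum.inl true)) = (a, b)) =
      (Fintype.piFinset fun _ : Fin r => pageFinset k m' a b).image
        (fun h => Sum.elim (fun s => bif s then b else a) (fun q => h q.1 q.2)) := by
    ext c
    simp only [Finset.mem_filter, Finset.mem_image, Fintype.mem_piFinset, bookFinset,
      Prod.mk.injEq]
    constructor
    · rintro ⟨⟨hpi, hadj⟩, hu, hv⟩
      refine ⟨fun i j => c (Sum.inr (i, j)), fun i => ?_, ?_⟩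
      · simp only [pageFinset, Finset.mem_filter, Fintype.mem_piFinset]
        refine ⟨fun j => hpi _, ?_, ?_, ?_⟩
        · have h1 : bookAdj (m'+3) r (Sum.inl false) (Sum.inr (i, (0 : Fin (m'+1)))) := rfl
          have h2 := hadj _ _ h1
          rw [show sigmaUV (m'+3) r (Sum.inl false) (Sum.inr (i, (0 : Fin (m'+1)))) = 1 from rfl,
            one_mul, hu] at h2
          exact h2
        · have h1 : bookAdj (m'+3) r (Sum.inr (i, Fin.last m')) (Sum.inl true) := rfl
          have h2 := hadj _ _ h1
          rw [show sigmaUV (m'+3) r (Sum.inr (i, Fin.last m')) (Sum.inl true) = 1 from rfl,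
            one_mul, hv] at h2
          exact h2
        · intro j
          have h1 : bookAdj (m'+3) r (Sum.inr (i, j.castSucc)) (Sum.inr (i, j.succ)) :=
            ⟨rfl, Or.inl (by simp)⟩
          have h2 := hadj _ _ h1
          rwa [show sigmaUV (m'+3) r (Sum.inr (i, j.castSucc)) (Sum.inr (i, j.succ)) = 1
            from rfl, one_mul] at h2
      · funext x
        rcases x with s | ⟨i, j⟩
        · cases s
          · exact hu.symm
          · exact hv.symm
        · rfl
    · rintro ⟨h, hh, rfl⟩
      have hh' : ∀ i, (∀ j, h i j ∈ Finset.Icc (-(k:ℤ)) k) ∧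
          (a ≠ h i 0 ∧ h i (Fin.last m') ≠ b ∧
            ∀ j : Fin m', h i j.castSucc ≠ h i j.succ) := by
        intro i
        have := Finset.mem_filter.mp (hh i)
        exact ⟨Fintype.mem_piFinset.mp this.1, this.2⟩
      refine ⟨⟨?_, ?_⟩, rfl, rfl⟩
      · intro x
        rcases x with s | ⟨i, j⟩
        · cases s
          · exact ha
          · exact hb
        · exact (hh' i).1 j
      · intro x y hxy
        rcases x with s | ⟨i, j⟩ <;> rcases y with s' | ⟨i', j'⟩
        · cases s <;> cases s'
          · exact absurd rfl hxy
          · have hs : sigmaUV (m'+3) r (Sum.inl false) (Sum.inl true) = -1 := rfl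
            rw [hs]
            simp only [Sum.elim_inl, cond_false, cond_true]
            intro hcon; apply hab; omega
          · have hs : sigmaUV (m'+3) r (Sum.inl true) (Sum.inl false) = -1 := rfl
            rw [hs]
            simp only [Sum.elim_inl, cond_false, cond_true]
            intro hcon; apply hab; omega
          · exact absurd rfl hxy
        · cases s
          · have hj : j' = (0 : Fin (m'+1)) := Fin.ext (hxy : j'.val = 0)
            subst hj
            have hs : sigmaUV (m'+3) r (Sum.inl false) (Sum.inr (i', (0:Fin (m'+1)))) = 1 := rfl
            rw [hs, one_mul]
            exact (hh' i').2.1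
          · have hj : j' = Fin.last m' := Fin.ext (hxy : j'.val = m'+3-3)
            subst hj
            have hs : sigmaUV (m'+3) r (Sum.inl true) (Sum.inr (i', Fin.last m')) = 1 := rfl
            rw [hs, one_mul]
            exact ((hh' i').2.2.1).symm
        · cases s'
          · have hj : j = (0 : Fin (m'+1)) := Fin.ext (hxy : j.val = 0)
            subst hj
            have hs : sigmaUV (m'+3) r (Sum.inr (i, (0:Fin (m'+1)))) (Sum.inl false) = 1 := rfl
            rw [hs, one_mul]
            exact ((hh' i).2.1).symm
          · have hj : j = Fin.last m' := Fin.ext (hxy : j.val = m'+3-3)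
            subst hj
            have hs : sigmaUV (m'+3) r (Sum.inr (i, Fin.last m')) (Sum.inl true) = 1 := rfl
            rw [hs, one_mul]
            exact (hh' i).2.2.1
        · obtain ⟨hii, hor⟩ := (hxy : i = i' ∧ (j.val + 1 = j'.val ∨ j'.val + 1 = j.val))
          subst hii
          have hs : sigmaUV (m'+3) r (Sum.inr (i, j)) (Sum.inr (i, j')) = 1 := rfl
          rw [hs, one_mul]
          simp only [Sum.elim_inr]
          rcases hor with hor | hor
          · have hjval : j'.val < m'+1 := j'.isLt
            set jj : Fin m' := ⟨j.val, by omega⟩ with hjj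
            have e1 : jj.castSucc = j := Fin.ext rfl
            have e2 : jj.succ = j' := Fin.ext (by simp [hjj]; omega)
            rw [← e1, ← e2]
            exact (hh' i).2.2.2 jj
          · have hjval : j.val < m'+1 := j.isLt
            set jj : Fin m' := ⟨j'.val, by omega⟩ with hjj
            have e1 : jj.castSucc = j' := Fin.ext rfl
            have e2 : jj.succ = j := Fin.ext (by simp [hjj]; omega)
            rw [← e1, ← e2]
            exact ((hh' i).2.2.2 jj).symm
  rw [key, Finset.card_image_of_injective _ ?_, Fintype.card_piFinset]
  · rw [Finset.prod_const, Finset.card_univ, Fintype.card_fin]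
  · intro h h' he
    funext i j
    exact congrFun he (Sum.inr (i, j))

lemma bookFinset_card (k m' r : ℕ) :
    ((bookFinset (m'+3) r k).card : ℤ)
      = 2*k*((pq k (m'+2)).2)^r + (2*(k:ℤ))^2*((pq k (m'+2)).1)^r := by
  classical
  have hmap : ∀ c ∈ bookFinset (m'+3) r k,
      (c (Sum.inl false), c (Sum.inl true)) ∈
        ((Finset.Icc (-(k:ℤ)) k) ×ˢ (Finset.Icc (-(k:ℤ)) k)).filter (fun p => p.1 ≠ -p.2) := by
    intro c hc
    obtain ⟨hpi, hadj⟩ := Finset.mem_filter.mp hc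
    rw [Finset.mem_filter, Finset.mem_product]
    refine ⟨⟨Fintype.mem_piFinset.mp hpi _, Fintype.mem_piFinset.mp hpi _⟩, ?_⟩
    have h1 : bookAdj (m'+3) r (Sum.inl false) (Sum.inl true) := Bool.false_ne_true
    have h2 := hadj _ _ h1
    rw [show sigmaUV (m'+3) r (Sum.inl false) (Sum.inl true) = -1 from rfl,
      neg_one_mul] at h2
    exact h2
  rw [Finset.card_eq_sum_card_fiberwise hmap]
  push_cast
  have hcong : ∀ p ∈ ((Finset.Icc (-(k:ℤ)) k) ×ˢ (Finset.Icc (-(k:ℤ)) k)).filter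
      (fun p => p.1 ≠ -p.2),
      (((bookFinset (m'+3) r k).filter
        (fun c => (c (Sum.inl false), c (Sum.inl true)) = p)).card : ℤ)
      = (if p.1 = p.2 then (pq k (m'+2)).2 else (pq k (m'+2)).1)^r := by
    intro p hp
    obtain ⟨a, b⟩ := p
    rw [Finset.mem_filter, Finset.mem_product] at hp
    obtain ⟨⟨ha, hb⟩, hab⟩ := hp
    rw [fiber_card k m' r a b ha hb hab]
    push_cast
    rw [pageFinset_card k m' a b ha hb]
  rw [Finset.sum_congr rfl hcong, sum_pairs]

lemma NColUV_eq (m r k : ℕ) : NColUV m r k = (bookFinset m r k).card := by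
  classical
  rw [NColUV]
  have he : ∀ c : BookVertex m r → ℤ,
      ((∀ x, |c x| ≤ (k:ℤ)) ∧ ∀ x y, bookAdj m r x y → c x ≠ sigmaUV m r x y * c y)
      ↔ c ∈ bookFinset m r k := by
    intro c
    rw [bookFinset, Finset.mem_filter, Fintype.mem_piFinset]
    simp only [Finset.mem_Icc, abs_le]
  rw [Nat.card_congr (Equiv.subtypeEquivRight he), Nat.card_eq_finsetCard]

/-- Recursion for the chromatic polynomial of `B^{uv}(m,n)`, with `λ = 2k+1`:
`N(m,n) = (λ-1)·γ_{m-1}(λ)·N(m,n-1) + (-1)^m·(λ-1)^2·γ_m(λ)^{n-1}`. -/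
theorem statement11 (m n : ℕ) (hm : 3 ≤ m) (hn : 2 ≤ n) (k : ℕ) :
    (NColUV m n k : ℤ) =
      ((2 * (k : ℤ) + 1) - 1) * gammaP (m - 1) (2 * (k : ℤ) + 1) * (NColUV m (n - 1) k : ℤ) +
        (-1) ^ m * ((2 * (k : ℤ) + 1) - 1) ^ 2 * gammaP m (2 * (k : ℤ) + 1) ^ (n - 1) := by

  obtain ⟨m', rfl⟩ : ∃ m', m = m'+3 := ⟨m-3, by omega⟩
  obtain ⟨n', rfl⟩ : ∃ n', n = n'+2 := ⟨n-2, by omega⟩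
  rw [NColUV_eq, NColUV_eq]
  rw [show (n'+2)-1 = n'+1 from rfl, show (m'+3)-1 = m'+2 from rfl]
  rw [bookFinset_card k m' (n'+2), bookFinset_card k m' (n'+1)]
  obtain ⟨hp, hq⟩ := pq_eq_gamma k (m'+1)
  rw [hp, hq]
  have hrec : gammaP (m'+3) (2*(k:ℤ)+1)
      = 2*(k:ℤ) * gammaP (m'+2) (2*(k:ℤ)+1) + (-1)^(m'+1) := by
    rw [show m'+3 = (m'+1)+2 from rfl, gammaP_rec]
    ring
  have hpow : (-1:ℤ)^(m'+3) = (-1)^(m'+1) := by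
    rw [show m'+3 = (m'+1)+2 from rfl, pow_add]
    norm_num
  rw [hrec, hpow]
  generalize gammaP (m'+2) (2*(k:ℤ)+1) = g
  generalize (-1:ℤ)^(m'+1) = e
  ring
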